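/- Assume f = max A = b−1 and let s be a complex number with Re s > log N / log b. For real m > 0 define F_s(m) = m^s Σ_{l=−∞}^{∞} γ_B(−b^{−l} m) e^{−m b^{−l}} b^{−ls}. Then this bilateral series converges absolutely for every m > 0, and F_s(bm) = F_s(m) for all m > 0; i.e., F_s is a 1-periodic function of log_b(m). -/

import Mathlib

open Finset

noncomputable section

/-- α_B(t) = Σ_{d∈B} e^{dt}. -/
def alphaB (B : Finset ℕ) (t : ℝ) : ℝ := ∑ d ∈ B, Real.exp (d * t)

/-- γ_B(−t) = Π_{i≥0} α_B(−b^i t), as a function of t. -/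
def gammaNeg (b : ℕ) (B : Finset ℕ) (t : ℝ) : ℝ := ∏' i : ℕ, alphaB B (-((b : ℝ) ^ i * t))

/-- The l-th term (l ∈ ℤ) of the bilateral series defining F_s(m), without the m^s factor:
γ_B(−b^{−l}m) e^{−mb^{−l}} b^{−ls}. -/
def FsTerm (b : ℕ) (B : Finset ℕ) (s : ℂ) (m : ℝ) (l : ℤ) : ℂ :=
  ((gammaNeg b B ((b : ℝ) ^ (-l) * m) : ℝ) : ℂ) *
    ((Real.exp (-(m * (b : ℝ) ^ (-l))) : ℝ) : ℂ) * (b : ℂ) ^ (-(l : ℂ) * s)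

/-- F_s(m) = m^s Σ_{l∈ℤ} γ_B(−b^{−l}m) e^{−mb^{−l}} b^{−ls}. -/
def Fs (b : ℕ) (B : Finset ℕ) (s : ℂ) (m : ℝ) : ℂ :=
  (m : ℂ) ^ s * ∑' l : ℤ, FsTerm b B s m l

namespace FsAux

variable {b : ℕ} {B : Finset ℕ}

lemma alpha_ge_one (hB : 0 ∈ B) (u : ℝ) : 1 ≤ alphaB B u := by
  have h := Finset.single_le_sum (f := fun d : ℕ => Real.exp (d * u))
    (fun d _ => (Real.exp_pos _).le) hB
  simpa [alphaB] using h

lemma alpha_pos (hB : 0 ∈ B) (u : ℝ) : 0 < alphaB B u :=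
  lt_of_lt_of_le one_pos (alpha_ge_one hB u)

lemma alpha_le_card {u : ℝ} (hu : u ≤ 0) : alphaB B u ≤ B.card := by
  have : alphaB B u ≤ ∑ _d ∈ B, (1 : ℝ) := by
    refine Finset.sum_le_sum fun d _ => ?_
    have hd : (d : ℝ) * u ≤ 0 := mul_nonpos_of_nonneg_of_nonpos (Nat.cast_nonneg d) hu
    calc Real.exp ((d : ℝ) * u) ≤ Real.exp 0 := Real.exp_le_exp.mpr hd
      _ = 1 := Real.exp_zero
  simpa using this

lemma alpha_mono {u v : ℝ} (huv : u ≤ v) : alphaB B u ≤ alphaB B v :=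
  Finset.sum_le_sum fun d _ =>
    Real.exp_le_exp.mpr (mul_le_mul_of_nonneg_left huv (Nat.cast_nonneg d))

lemma alpha_le_one_add (hB : 0 ∈ B) {u : ℝ} (hu : 0 ≤ u) :
    alphaB B (-u) ≤ 1 + B.card * Real.exp (-u) := by
  classical
  have hsplit : alphaB B (-u)
      = Real.exp ((0 : ℕ) * (-u)) + ∑ d ∈ B.erase 0, Real.exp (d * (-u)) :=
    (Finset.add_sum_erase _ _ hB).symm
  rw [hsplit]
  simp only [Nat.cast_zero, zero_mul, Real.exp_zero]
  have hterm : ∀ d ∈ B.erase 0, Real.exp ((d : ℝ) * (-u)) ≤ Real.exp (-u) := by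
    intro d hd
    have hd1 : (1 : ℝ) ≤ (d : ℝ) := by
      exact_mod_cast Nat.one_le_iff_ne_zero.mpr (Finset.ne_of_mem_erase hd)
    exact Real.exp_le_exp.mpr (by nlinarith)
  have hsum : ∑ d ∈ B.erase 0, Real.exp ((d : ℝ) * (-u))
      ≤ (B.erase 0).card * Real.exp (-u) := by
    have := Finset.sum_le_card_nsmul (B.erase 0) _ _ hterm
    simpa [nsmul_eq_mul] using this
  have hcard : ((B.erase 0).card : ℝ) ≤ (B.card : ℝ) := by
    exact_mod_cast Finset.card_erase_le
  have hle := mul_le_mul_of_nonneg_right hcard (Real.exp_nonneg (-u))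
  linarith

lemma summable_log (hB : 0 ∈ B) (hb : 2 ≤ b) {t : ℝ} (ht : 0 < t) :
    Summable fun i : ℕ => Real.log (alphaB B (-((b : ℝ) ^ i * t))) := by
  have hb1 : 1 < b := hb
  have hgeo : Summable fun i : ℕ =>
      ((B.card : ℝ) * Real.exp (-t)) * (Real.exp (-t)) ^ i := by
    refine Summable.mul_left _ (summable_geometric_of_lt_one (Real.exp_nonneg _) ?_)
    calc Real.exp (-t) < Real.exp 0 := Real.exp_lt_exp.mpr (by linarith)
      _ = 1 := Real.exp_zero
  refine Summable.of_nonneg_of_le (fun i => Real.log_nonneg (alpha_ge_one hB _))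
    (fun i => ?_) hgeo
  have hpos : (0 : ℝ) < (b : ℝ) ^ i * t := by positivity
  have h1 : Real.log (alphaB B (-((b : ℝ) ^ i * t)))
      ≤ alphaB B (-((b : ℝ) ^ i * t)) - 1 :=
    Real.log_le_sub_one_of_pos (alpha_pos hB _)
  have h2 : alphaB B (-((b : ℝ) ^ i * t)) ≤ 1 + B.card * Real.exp (-((b : ℝ) ^ i * t)) :=
    alpha_le_one_add hB hpos.le
  have h3 : Real.exp (-((b : ℝ) ^ i * t)) ≤ Real.exp (-t) ^ (i + 1) := by
    rw [← Real.exp_nat_mul]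
    refine Real.exp_le_exp.mpr ?_
    have hpow : (i : ℝ) + 1 ≤ (b : ℝ) ^ i := by
      exact_mod_cast Nat.succ_le_of_lt (Nat.lt_pow_self (n := i) hb1)
    push_cast
    nlinarith
  have hcard : (0 : ℝ) ≤ (B.card : ℝ) := Nat.cast_nonneg _
  have h4 : Real.exp (-t) ^ (i + 1) = Real.exp (-t) * Real.exp (-t) ^ i := by ring
  nlinarith [mul_le_mul_of_nonneg_left h3 hcard]

lemma gamma_eq (hB : 0 ∈ B) (hb : 2 ≤ b) {t : ℝ} (ht : 0 < t) :
    gammaNeg b B t = Real.exp (∑' i : ℕ, Real.log (alphaB B (-((b : ℝ) ^ i * t)))) := by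
  have h := Real.rexp_tsum_eq_tprod
    (f := fun (i : ℕ) => alphaB B (-((b : ℝ) ^ i * t)))
    (fun i => alpha_pos hB _) (summable_log hB hb ht)
  have h2 := h
  simpa [gammaNeg, Function.comp] using h2.symm

lemma gamma_pos (hB : 0 ∈ B) (hb : 2 ≤ b) {t : ℝ} (ht : 0 < t) :
    0 < gammaNeg b B t := by
  rw [gamma_eq hB hb ht]; exact Real.exp_pos _

lemma gamma_rec (hB : 0 ∈ B) (hb : 2 ≤ b) {t : ℝ} (ht : 0 < t) :
    gammaNeg b B t = alphaB B (-t) * gammaNeg b B ((b : ℝ) * t) := by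
  have hbt : (0 : ℝ) < (b : ℝ) * t := by
    have : (0:ℝ) < (b:ℝ) := by positivity
    positivity
  rw [gamma_eq hB hb ht, Summable.tsum_eq_zero_add (summable_log hB hb ht), Real.exp_add]
  congr 1
  · rw [show ((b : ℝ) ^ (0:ℕ) * t) = t by simp, Real.exp_log (alpha_pos hB _)]
  · rw [gamma_eq hB hb hbt]
    congr 1
    exact tsum_congr fun i => by rw [show (b : ℝ) ^ (i + 1) * t = (b : ℝ) ^ i * ((b:ℝ) * t) by ring]

lemma gamma_anti (hB : 0 ∈ B) (hb : 2 ≤ b) {t u : ℝ} (ht : 0 < t) (htu : t ≤ u) :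
    gammaNeg b B u ≤ gammaNeg b B t := by
  have hu : 0 < u := lt_of_lt_of_le ht htu
  rw [gamma_eq hB hb ht, gamma_eq hB hb hu]
  refine Real.exp_le_exp.mpr (Summable.tsum_le_tsum (fun i => ?_) (summable_log hB hb hu)
    (summable_log hB hb ht))
  have hpow : (0:ℝ) ≤ (b:ℝ) ^ i := by positivity
  refine Real.log_le_log (alpha_pos hB _) (alpha_mono ?_)
  have := mul_le_mul_of_nonneg_left htu hpow
  linarith

lemma gamma_le_pow (hB : 0 ∈ B) (hb : 2 ≤ b) :
    ∀ (l : ℕ) {t : ℝ}, 0 < t →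
      gammaNeg b B t ≤ (B.card : ℝ) ^ l * gammaNeg b B ((b : ℝ) ^ l * t)
  | 0, t, ht => by simp
  | (l + 1), t, ht => by
    have hbt : (0 : ℝ) < (b : ℝ) * t := by
      have : (0:ℝ) < (b:ℝ) := by positivity
      positivity
    have h1 := gamma_le_pow hB hb l hbt
    have h3 : alphaB B (-t) ≤ (B.card : ℝ) := alpha_le_card (by linarith)
    have h4 : (0:ℝ) < gammaNeg b B ((b : ℝ) * t) := gamma_pos hB hb hbt
    have h5 : (0:ℝ) ≤ (B.card : ℝ) := Nat.cast_nonneg _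
    have h6 : (0:ℝ) < gammaNeg b B ((b:ℝ) ^ l * ((b:ℝ) * t)) :=
      gamma_pos hB hb (by positivity)
    calc gammaNeg b B t = alphaB B (-t) * gammaNeg b B ((b : ℝ) * t) := gamma_rec hB hb ht
      _ ≤ (B.card : ℝ) * gammaNeg b B ((b : ℝ) * t) :=
          mul_le_mul_of_nonneg_right h3 h4.le
      _ ≤ (B.card : ℝ) * ((B.card : ℝ) ^ l * gammaNeg b B ((b:ℝ) ^ l * ((b:ℝ) * t))) :=
          mul_le_mul_of_nonneg_left h1 h5
      _ = (B.card : ℝ) ^ (l + 1) * gammaNeg b B ((b : ℝ) ^ (l+1) * t) := by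
          rw [show (b:ℝ) ^ (l+1) * t = (b:ℝ) ^ l * ((b:ℝ) * t) by ring]; ring


lemma norm_FsTerm (hB : 0 ∈ B) (hb : 2 ≤ b) {m : ℝ} (hm : 0 < m) (s : ℂ) (l : ℤ) :
    ‖FsTerm b B s m l‖ = gammaNeg b B ((b : ℝ) ^ (-l) * m) *
      Real.exp (-(m * (b : ℝ) ^ (-l))) * (b : ℝ) ^ ((-l : ℝ) * s.re) := by
  have hb0 : (0 : ℝ) < (b : ℝ) := by exact_mod_cast lt_of_lt_of_le two_pos hb
  have harg : (0 : ℝ) < (b : ℝ) ^ (-l) * m := by positivity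
  unfold FsTerm
  rw [norm_mul, norm_mul, Complex.norm_real, Complex.norm_real,
    Real.norm_of_nonneg (gamma_pos hB hb harg).le, Real.norm_of_nonneg (Real.exp_nonneg _)]
  congr 1
  have hcast : ((b : ℕ) : ℂ) = (((b : ℝ) : ℝ) : ℂ) := by norm_cast
  rw [hcast, Complex.norm_cpow_eq_rpow_re_of_pos hb0]
  congr 1
  simp [Complex.mul_re]

end FsAux

theorem Fs_periodic
    (b : ℕ) (hb : 2 ≤ b) (A : Finset ℕ) (hA : A.Nonempty) (hAb : A ⊆ Finset.range b)
    (hbA : b - 1 ∈ A)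
    (s : ℂ) (hs : Real.log A.card / Real.log b < s.re) :
    (∀ m : ℝ, 0 < m →
        Summable (fun l : ℤ => ‖FsTerm b (A.image fun a => b - 1 - a) s m l‖))
    ∧ ∀ m : ℝ, 0 < m →
        Fs b (A.image fun a => b - 1 - a) s ((b : ℝ) * m)
          = Fs b (A.image fun a => b - 1 - a) s m := by
  set B := A.image fun a => b - 1 - a with hBdef
  have hB0 : 0 ∈ B := Finset.mem_image.mpr ⟨b - 1, hbA, Nat.sub_self _⟩
  have hb0 : (0 : ℝ) < (b : ℝ) := by exact_mod_cast lt_of_lt_of_le two_pos hb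
  have hb1 : (1 : ℝ) < (b : ℝ) := by exact_mod_cast lt_of_lt_of_le one_lt_two hb
  have hbne : (b : ℂ) ≠ 0 := by
    simp only [ne_eq, Nat.cast_eq_zero]; omega
  constructor
  · -- summability
    intro m hm
    have hcard : B.card = A.card := by
      rw [hBdef]
      apply Finset.card_image_of_injOn
      intro x hx y hy hxy
      simp only at hxy
      have hx' : x < b := Finset.mem_range.mp (hAb hx)
      have hy' : y < b := Finset.mem_range.mp (hAb hy)
      omega
    have hN0 : (0 : ℝ) < (A.card : ℝ) := by
      exact_mod_cast Finset.card_pos.mpr hA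
    have hlogb : (0 : ℝ) < Real.log b := Real.log_pos hb1
    set K := (b : ℝ) ^ s.re with hK
    have hK0 : (0 : ℝ) < K := Real.rpow_pos_of_pos hb0 s.re
    have hNK : (A.card : ℝ) < K := by
      have h1 : Real.log (A.card : ℝ) < Real.log K := by
        rw [hK, Real.log_rpow hb0]
        have := (div_lt_iff₀ hlogb).mp hs
        linarith
      exact (Real.log_lt_log_iff hN0 hK0).mp h1
    set r : ℝ := (A.card : ℝ) / K with hr
    have hr0 : 0 ≤ r := by positivity
    have hr1 : r < 1 := (div_lt_one hK0).mpr hNK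
    have hγm : 0 < gammaNeg b B m := FsAux.gamma_pos hB0 hb hm
    apply Summable.of_nat_of_neg
    · -- positive side
      refine Summable.of_nonneg_of_le (fun n => norm_nonneg _) (fun n => ?_)
        ((summable_geometric_of_lt_one hr0 hr1).mul_left (gammaNeg b B m))
      rw [FsAux.norm_FsTerm hB0 hb hm s (n : ℤ)]
      have harg : (0:ℝ) < (b:ℝ) ^ (-(n:ℤ)) * m := by positivity
      have hinv : (b:ℝ) ^ (n:ℕ) * ((b:ℝ) ^ (-(n:ℤ)) * m) = m := by
        rw [← zpow_natCast (b:ℝ) n, ← mul_assoc, ← zpow_add₀ (ne_of_gt hb0)]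
        simp
      have g1 : gammaNeg b B ((b:ℝ) ^ (-(n:ℤ)) * m) ≤ (A.card:ℝ) ^ n * gammaNeg b B m := by
        have h := FsAux.gamma_le_pow hB0 hb n harg
        rwa [hinv, hcard] at h
      have g2 : Real.exp (-(m * (b:ℝ) ^ (-(n:ℤ)))) ≤ 1 := by
        rw [← Real.exp_zero]
        apply Real.exp_le_exp.mpr
        nlinarith [harg]
      have g3 : (b:ℝ) ^ ((-((n:ℤ)) : ℝ) * s.re) = (K ^ (n:ℕ))⁻¹ := by
        push_cast
        rw [show -(n:ℝ) * s.re = s.re * (-(n:ℝ)) by ring, Real.rpow_mul hb0.le, ← hK,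
          Real.rpow_neg hK0.le, Real.rpow_natCast]
      rw [g3]
      have hγ0 : 0 ≤ gammaNeg b B ((b:ℝ) ^ (-(n:ℤ)) * m) :=
        (FsAux.gamma_pos hB0 hb harg).le
      have hstep : gammaNeg b B ((b:ℝ) ^ (-(n:ℤ)) * m) * Real.exp (-(m * (b:ℝ) ^ (-(n:ℤ))))
          ≤ (A.card:ℝ) ^ n * gammaNeg b B m :=
        le_trans (mul_le_mul g1 g2 (Real.exp_nonneg _) (by positivity)) (by ring_nf; rfl)
      have hfin : gammaNeg b B m * r ^ n
          = ((A.card:ℝ) ^ n * gammaNeg b B m) * (K ^ (n:ℕ))⁻¹ := by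
        rw [hr, div_pow]
        field_simp
      rw [hfin]
      exact mul_le_mul_of_nonneg_right hstep (by positivity)
    · -- negative side
      set g : ℕ → ℝ := fun n => Real.exp (-(m * (b:ℝ) ^ (n:ℕ))) * K ^ n with hg
      have hgpos : ∀ n, 0 < g n := fun n => by rw [hg]; positivity
      have hgsum : Summable g := by
        apply summable_of_ratio_norm_eventually_le (r := 1/2) (by norm_num)
        have htend : Filter.Tendsto
            (fun n : ℕ => K * Real.exp (-(m * (b:ℝ) ^ n * ((b:ℝ) - 1))))
            Filter.atTop (nhds (K * 0)) := by
          apply Filter.Tendsto.const_mul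
          apply Real.tendsto_exp_atBot.comp
          apply Filter.tendsto_neg_atTop_atBot.comp
          have h1 : Filter.Tendsto (fun n : ℕ => (b:ℝ) ^ n) Filter.atTop Filter.atTop :=
            tendsto_pow_atTop_atTop_of_one_lt hb1
          exact (h1.const_mul_atTop hm).atTop_mul_const (by linarith)
        rw [mul_zero] at htend
        filter_upwards [htend.eventually_lt_const (by norm_num : (0:ℝ) < 1/2)] with n hn
        rw [Real.norm_of_nonneg (hgpos _).le, Real.norm_of_nonneg (hgpos _).le]
        have hsplit : g (n+1) = g n * (K * Real.exp (-(m * (b:ℝ) ^ n * ((b:ℝ) - 1)))) := by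
          rw [hg]
          simp only
          rw [show -(m * (b:ℝ) ^ (n+1)) = -(m * (b:ℝ)^n) + -(m * (b:ℝ)^n * ((b:ℝ)-1)) by ring,
            Real.exp_add]
          ring
        rw [hsplit]
        nlinarith [hgpos n, hn]
      refine Summable.of_nonneg_of_le (fun n => norm_nonneg _) (fun n => ?_)
        (hgsum.mul_left (gammaNeg b B m))
      rw [FsAux.norm_FsTerm hB0 hb hm s (-(n:ℤ))]
      have e1 : (b:ℝ) ^ (-(-(n:ℤ))) = (b:ℝ) ^ (n:ℕ) := by
        rw [neg_neg, zpow_natCast]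
      have e2 : (b:ℝ) ^ (-(((-(n:ℤ)) : ℤ) : ℝ) * s.re) = K ^ (n:ℕ) := by
        push_cast
        rw [neg_neg, show (n:ℝ) * s.re = s.re * (n:ℝ) by ring, Real.rpow_mul hb0.le, ← hK,
          Real.rpow_natCast]
      rw [e1, e2]
      have harg : (0:ℝ) < (b:ℝ) ^ (n:ℕ) * m := by positivity
      have hmono : gammaNeg b B ((b:ℝ) ^ (n:ℕ) * m) ≤ gammaNeg b B m := by
        apply FsAux.gamma_anti hB0 hb hm
        have hpow1 : (1:ℝ) ≤ (b:ℝ) ^ (n:ℕ) := one_le_pow₀ hb1.le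
        nlinarith
      have hEK : (0:ℝ) ≤ Real.exp (-(m * (b:ℝ) ^ (n:ℕ))) * K ^ (n:ℕ) := by positivity
      calc gammaNeg b B ((b:ℝ) ^ (n:ℕ) * m) * Real.exp (-(m * (b:ℝ) ^ (n:ℕ))) * K ^ (n:ℕ)
          = gammaNeg b B ((b:ℝ) ^ (n:ℕ) * m)
              * (Real.exp (-(m * (b:ℝ) ^ (n:ℕ))) * K ^ (n:ℕ)) := by ring
        _ ≤ gammaNeg b B m * (Real.exp (-(m * (b:ℝ) ^ (n:ℕ))) * K ^ (n:ℕ)) :=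
            mul_le_mul_of_nonneg_right hmono hEK
        _ = gammaNeg b B m * g n := by rw [hg]
  · -- periodicity
    intro m hm
    unfold Fs
    have hzero : (b:ℝ) ≠ 0 := ne_of_gt hb0
    have hterm : ∀ l : ℤ,
        FsTerm b B s ((b:ℝ) * m) l = FsTerm b B s m (l - 1) * (b:ℂ) ^ (-s) := by
      intro l
      unfold FsTerm
      have e1 : (b:ℝ) ^ (-l) * ((b:ℝ) * m) = (b:ℝ) ^ (-(l - 1)) * m := by
        rw [show -(l - 1) = -l + 1 by ring, zpow_add₀ hzero, zpow_one]; ring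
      have e2 : -((b:ℝ) * m * (b:ℝ) ^ (-l)) = -(m * (b:ℝ) ^ (-(l - 1))) := by
        rw [show -(l - 1) = -l + 1 by ring, zpow_add₀ hzero, zpow_one]; ring
      have e3 : (b:ℂ) ^ (-(l:ℂ) * s) = (b:ℂ) ^ (-((l - 1 : ℤ) : ℂ) * s) * (b:ℂ) ^ (-s) := by
        rw [← Complex.cpow_add _ _ hbne]
        congr 1
        push_cast
        ring
      rw [e1, e2, e3]
      ring
    rw [tsum_congr hterm, tsum_mul_right]
    have hre : ∑' l : ℤ, FsTerm b B s m (l - 1) = ∑' l : ℤ, FsTerm b B s m l :=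
      (Equiv.subRight (1:ℤ)).tsum_eq (FsTerm b B s m)
    rw [hre]
    have hmul : ((((b:ℝ) * m : ℝ)) : ℂ) ^ s = ((b:ℝ):ℂ) ^ s * ((m:ℝ):ℂ) ^ s := by
      rw [Complex.ofReal_mul]
      exact Complex.mul_cpow_ofReal_nonneg hb0.le hm.le s
    have hbs : (b:ℂ) ^ s * (b:ℂ) ^ (-s) = 1 := by
      rw [← Complex.cpow_add _ _ hbne]
      simp
    rw [hmul, show ((b:ℝ):ℂ) = (b:ℂ) from by norm_cast]
    calc (b:ℂ) ^ s * (m:ℂ) ^ s * ((∑' l : ℤ, FsTerm b B s m l) * (b:ℂ) ^ (-s))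
        = ((b:ℂ) ^ s * (b:ℂ) ^ (-s)) * ((m:ℂ) ^ s * ∑' l : ℤ, FsTerm b B s m l) := by ring
      _ = (m:ℂ) ^ s * ∑' l : ℤ, FsTerm b B s m l := by rw [hbs, one_mul]
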